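/- arXiv:2009.05351 — 2 statements merged into one kernel-verified Lean document; each statement's English description precedes it below -/
import Mathlib

section
/- Let h : (0,b) → [0,∞) be non-increasing and right-continuous, b ∈ (0,∞], and fix t ∈ (0,b). Then the map u ↦ ∫₀ᵗ u*(s) h(s) ds is subadditive on nonnegative measurable functions u on a measure space (X,μ), i.e., ∫₀ᵗ (u+v)*(s) h(s) ds ≤ ∫₀ᵗ u*(s) h(s) ds + ∫₀ᵗ v*(s) h(s) ds. -/
open MeasureTheory ENNReal Set

/-- The decreasing rearrangement of `f` with respect to `μ`. -/
noncomputable def rearr {X : Type*} [MeasurableSpace X] (μ : Measure X) (f : X → ℝ) (t : ℝ) : ℝ :=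
  sInf {l : ℝ | 0 ≤ l ∧ μ {x | l < |f x|} ≤ ENNReal.ofReal t}

/-- The maximal (average) decreasing rearrangement `f**`. -/
noncomputable def maxRearr {X : Type*} [MeasurableSpace X] (μ : Measure X) (f : X → ℝ) (t : ℝ) : ℝ :=
  (1 / t) * ∫ s in Set.Ioc (0:ℝ) t, rearr μ f s

namespace RearrAux

variable {X : Type*} [MeasurableSpace X] (μ : Measure X)

/-- The distribution function. -/
noncomputable def dd (f : X → ℝ) (l : ℝ) : ℝ≥0∞ := μ {x | l < |f x|}

lemma dd_antitone (f : X → ℝ) : Antitone (dd μ f) :=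
  fun _ _ hab => measure_mono fun _ hx => lt_of_le_of_lt hab hx

lemma dd_measurable (f : X → ℝ) : Measurable (dd μ f) := (dd_antitone μ f).measurable

/-- The defining set of the rearrangement. -/
def SS (f : X → ℝ) (s : ℝ) : Set ℝ := {l | 0 ≤ l ∧ dd μ f l ≤ ENNReal.ofReal s}

lemma rearr_eq (f : X → ℝ) (s : ℝ) : rearr μ f s = sInf (SS μ f s) := rfl

lemma SS_bddBelow (f : X → ℝ) (s : ℝ) : BddBelow (SS μ f s) := ⟨0, fun _ hl => hl.1⟩

lemma SS_mono (f : X → ℝ) {s s' : ℝ} (hss' : s ≤ s') : SS μ f s ⊆ SS μ f s' :=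
  fun _ hl => ⟨hl.1, hl.2.trans (ENNReal.ofReal_le_ofReal hss')⟩

lemma rearr_nonneg (f : X → ℝ) (s : ℝ) : 0 ≤ rearr μ f s :=
  Real.sInf_nonneg fun _ hl => hl.1

lemma rearr_le (f : X → ℝ) {s σ : ℝ} (hσ : 0 ≤ σ) (hd : dd μ f σ ≤ ENNReal.ofReal s) :
    rearr μ f s ≤ σ := csInf_le (SS_bddBelow μ f s) ⟨hσ, hd⟩

lemma SS_nonempty (f : X → ℝ) (hf : Measurable f) {L s : ℝ} (hfin : dd μ f L ≠ ∞)
    (hs : 0 < s) : (SS μ f s).Nonempty := by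
  set M := max L 0 with hM
  have hmeas : ∀ n : ℕ, MeasurableSet {x | M + n < |f x|} := fun n =>
    measurableSet_lt measurable_const hf.abs
  have hanti : Antitone fun n : ℕ => {x | M + n < |f x|} := by
    intro n m hnm x hx
    have hc : (n:ℝ) ≤ m := Nat.cast_le.2 hnm
    simp only [mem_setOf_eq] at hx ⊢
    linarith
  have hiInter : (⋂ n : ℕ, {x | M + (n:ℝ) < |f x|}) = ∅ := by
    ext x
    simp only [mem_iInter, mem_setOf_eq, mem_empty_iff_false, iff_false, not_forall, not_lt]
    obtain ⟨n, hn⟩ := exists_nat_gt (|f x| - M)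
    exact ⟨n, by linarith⟩
  have hfin0 : μ {x | M + (0:ℕ) < |f x|} ≠ ∞ := by
    refine ne_top_of_le_ne_top hfin (measure_mono fun x hx => ?_)
    simp only [mem_setOf_eq] at hx ⊢
    exact lt_of_le_of_lt (le_trans (le_max_left L 0) (by simp [hM])) hx
  have htend := tendsto_measure_iInter_atTop (fun n => (hmeas n).nullMeasurableSet) hanti ⟨0, hfin0⟩
  rw [hiInter, measure_empty] at htend
  have : ∀ᶠ n : ℕ in Filter.atTop, μ {x | M + (n:ℝ) < |f x|} < ENNReal.ofReal s :=
    htend.eventually_lt_const (by simpa using hs)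
  obtain ⟨n, hn⟩ := this.exists
  exact ⟨M + n, ⟨by positivity, le_of_lt hn⟩⟩

lemma dd_le_of_rearr_le (f : X → ℝ) {s σ : ℝ} (hne : (SS μ f s).Nonempty)
    (hr : rearr μ f s ≤ σ) : dd μ f σ ≤ ENNReal.ofReal s := by
  have key : ∀ n : ℕ, dd μ f (σ + 1 / (n + 1)) ≤ ENNReal.ofReal s := by
    intro n
    have h0 : (0:ℝ) < 1 / (n + 1) := by positivity
    have h1 : sInf (SS μ f s) < σ + 1 / (n + 1) := lt_of_le_of_lt hr (by linarith)
    obtain ⟨l, hl, hlt⟩ := exists_lt_of_csInf_lt hne h1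
    exact le_trans (dd_antitone μ f hlt.le) hl.2
  have hset : {x | σ < |f x|} = ⋃ n : ℕ, {x | σ + 1 / (n + 1) < |f x|} := by
    ext x
    simp only [mem_setOf_eq, mem_iUnion]
    constructor
    · intro hx
      obtain ⟨n, hn⟩ := exists_nat_one_div_lt (sub_pos.2 hx)
      exact ⟨n, by push_cast at hn ⊢; linarith⟩
    · rintro ⟨n, hn⟩
      have : (0:ℝ) < 1 / (n + 1) := by positivity
      linarith
  have hmono : Monotone fun n : ℕ => {x | σ + 1 / (n + 1) < |f x|} := by
    intro n m hnm x hx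
    simp only [mem_setOf_eq] at hx ⊢
    have : (1:ℝ) / (m + 1) ≤ 1 / (n + 1) := by
      apply one_div_le_one_div_of_le (by positivity)
      exact_mod_cast add_le_add_left (Nat.cast_le.2 hnm) 1
    linarith
  show μ {x | σ < |f x|} ≤ ENNReal.ofReal s
  rw [hset, hmono.directed_le.measure_iUnion]
  exact iSup_le key

lemma lt_rearr_iff (f : X → ℝ) {s σ : ℝ} (hne : (SS μ f s).Nonempty) (hσ : 0 ≤ σ) :
    σ < rearr μ f s ↔ ENNReal.ofReal s < dd μ f σ := by
  rw [← not_le, ← not_le]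
  constructor
  · intro H h2; exact H (rearr_le μ f hσ h2)
  · intro H h2; exact H (dd_le_of_rearr_le μ f hne h2)

lemma rearr_antitoneOn (f : X → ℝ) (hf : Measurable f) {L : ℝ} (hfin : dd μ f L ≠ ∞) :
    AntitoneOn (rearr μ f) (Ioi 0) := by
  intro s hs s' _ hss'
  exact csInf_le_csInf (SS_bddBelow μ f s') (SS_nonempty μ f hf hfin hs) (SS_mono μ f hss')

lemma rearr_aemeasurable (f : X → ℝ) (hf : Measurable f) {L : ℝ} (hfin : dd μ f L ≠ ∞)
    {y : ℝ} : AEMeasurable (fun s => ENNReal.ofReal (rearr μ f s)) (volume.restrict (Ioc 0 y)) := by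
  have h1 : AEMeasurable (rearr μ f) (volume.restrict (Ioc (0:ℝ) y)) :=
    aemeasurable_restrict_of_antitoneOn measurableSet_Ioc
      ((rearr_antitoneOn μ f hf hfin).mono Ioc_subset_Ioi_self)
  exact ENNReal.measurable_ofReal.comp_aemeasurable h1


lemma vol_inter {y : ℝ} (hy : 0 < y) (d : ℝ≥0∞) :
    volume (Ioc 0 y ∩ {s : ℝ | ENNReal.ofReal s < d}) = min (ENNReal.ofReal y) d := by
  rcases le_or_gt d (ENNReal.ofReal y) with hd | hd
  · have hdne : d ≠ ∞ := ne_top_of_le_ne_top ENNReal.ofReal_ne_top hd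
    have hcy : d.toReal ≤ y := by
      have := ENNReal.toReal_mono ENNReal.ofReal_ne_top hd
      rwa [ENNReal.toReal_ofReal hy.le] at this
    have hset : Ioc 0 y ∩ {s : ℝ | ENNReal.ofReal s < d} = Ioo 0 d.toReal := by
      ext s
      simp only [mem_inter_iff, mem_Ioc, mem_setOf_eq, mem_Ioo]
      constructor
      · rintro ⟨⟨h1, _⟩, h3⟩
        exact ⟨h1, (ENNReal.ofReal_lt_iff_lt_toReal h1.le hdne).1 h3⟩
      · rintro ⟨h1, h2⟩
        exact ⟨⟨h1, le_trans h2.le hcy⟩, (ENNReal.ofReal_lt_iff_lt_toReal h1.le hdne).2 h2⟩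
    rw [hset, Real.volume_Ioo, sub_zero, ENNReal.ofReal_toReal hdne, min_eq_right hd]
  · have hset : Ioc 0 y ∩ {s : ℝ | ENNReal.ofReal s < d} = Ioc 0 y := by
      refine inter_eq_left.2 fun s hs => ?_
      exact lt_of_le_of_lt (ENNReal.ofReal_le_ofReal hs.2) hd
    rw [hset, Real.volume_Ioc, sub_zero, min_eq_left hd.le]

variable {X : Type*} [MeasurableSpace X] (μ : Measure X)

lemma lintegral_rearr_eq (f : X → ℝ) (hf : Measurable f) {L : ℝ} (hfin : dd μ f L ≠ ∞)
    {y : ℝ} (hy : 0 < y) :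
    ∫⁻ s in Ioc 0 y, ENNReal.ofReal (rearr μ f s) =
      ∫⁻ σ in Ioi 0, min (ENNReal.ofReal y) (dd μ f σ) := by
  rw [lintegral_eq_lintegral_meas_lt _ (Filter.Eventually.of_forall fun s => rearr_nonneg μ f s)
    (aemeasurable_restrict_of_antitoneOn measurableSet_Ioc
      ((rearr_antitoneOn μ f hf hfin).mono Ioc_subset_Ioi_self))]
  refine setLIntegral_congr_fun measurableSet_Ioi (fun σ hσ => ?_)
  rw [Measure.restrict_apply' measurableSet_Ioc]
  have hset : {s : ℝ | σ < rearr μ f s} ∩ Ioc 0 y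
      = Ioc 0 y ∩ {s : ℝ | ENNReal.ofReal s < dd μ f σ} := by
    ext s
    simp only [mem_inter_iff, mem_setOf_eq, mem_Ioc]
    constructor
    · rintro ⟨h1, h2⟩
      exact ⟨h2, (lt_rearr_iff μ f (SS_nonempty μ f hf hfin h2.1) (le_of_lt hσ)).1 h1⟩
    · rintro ⟨h1, h2⟩
      exact ⟨(lt_rearr_iff μ f (SS_nonempty μ f hf hfin h1.1) (le_of_lt hσ)).2 h2, h1⟩
  rw [hset, vol_inter hy]

lemma lintegral_tail (f : X → ℝ) (hf : Measurable f) (hf0 : ∀ x, 0 ≤ f x)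
    {lam : ℝ} (hlam : 0 ≤ lam) :
    ∫⁻ x, ENNReal.ofReal (max (f x - lam) 0) ∂μ = ∫⁻ σ in Ioi lam, dd μ f σ := by
  have step1 : ∫⁻ x, ENNReal.ofReal (max (f x - lam) 0) ∂μ
      = ∫⁻ τ in Ioi 0, μ {x | τ < max (f x - lam) 0} :=
    lintegral_eq_lintegral_meas_lt μ (Filter.Eventually.of_forall fun x => le_max_right _ _)
      (((hf.sub measurable_const).max measurable_const).aemeasurable)
  have step2 : ∫⁻ τ in Ioi (0:ℝ), μ {x | τ < max (f x - lam) 0}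
      = ∫⁻ τ in Ioi (0:ℝ), dd μ f (τ + lam) := by
    refine setLIntegral_congr_fun measurableSet_Ioi (fun τ hτ => ?_)
    have : {x | τ < max (f x - lam) 0} = {x | τ + lam < |f x|} := by
      ext x
      simp only [mem_setOf_eq, lt_max_iff, abs_of_nonneg (hf0 x)]
      constructor
      · rintro (h1 | h1)
        · linarith
        · exact absurd h1 (not_lt.2 (le_of_lt hτ))
      · intro h1; left; linarith
    rw [this]; rfl
  have step3 : ∫⁻ τ in Ioi (0:ℝ), dd μ f (τ + lam) = ∫⁻ σ in Ioi lam, dd μ f σ := by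
    have hpre : ((· + lam) : ℝ → ℝ) ⁻¹' Ioi lam = Ioi 0 := by
      ext τ; simp [mem_Ioi]
    have := (measurePreserving_add_right volume lam).setLIntegral_comp_preimage_emb
      (MeasurableEquiv.addRight lam).measurableEmbedding (dd μ f) (Ioi lam)
    rw [hpre] at this
    exact this
  rw [step1, step2, step3]

lemma key_lower (f : X → ℝ) (hf : Measurable f) (hf0 : ∀ x, 0 ≤ f x) {L : ℝ}
    (hfin : dd μ f L ≠ ∞) {y : ℝ} (hy : 0 < y) :
    ENNReal.ofReal (rearr μ f y) * ENNReal.ofReal y +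
      ∫⁻ x, ENNReal.ofReal (max (f x - rearr μ f y) 0) ∂μ ≤
      ∫⁻ s in Ioc 0 y, ENNReal.ofReal (rearr μ f s) := by
  set lam := rearr μ f y with hlamdef
  have hlam0 : 0 ≤ lam := rearr_nonneg μ f y
  have hney : (SS μ f y).Nonempty := SS_nonempty μ f hf hfin hy
  rw [lintegral_tail μ f hf hf0 hlam0, lintegral_rearr_eq μ f hf hfin hy]
  have hsplit : Ioi (0:ℝ) = Ioc 0 lam ∪ Ioi lam := (Ioc_union_Ioi_eq_Ioi hlam0).symm
  rw [hsplit, lintegral_union measurableSet_Ioi (Ioc_disjoint_Ioi le_rfl)]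
  have term1 : ENNReal.ofReal lam * ENNReal.ofReal y ≤
      ∫⁻ σ in Ioc 0 lam, min (ENNReal.ofReal y) (dd μ f σ) := by
    calc ENNReal.ofReal lam * ENNReal.ofReal y
        = ∫⁻ _ in Ioo (0:ℝ) lam, ENNReal.ofReal y := by
          rw [setLIntegral_const, Real.volume_Ioo, sub_zero, mul_comm]
      _ = ∫⁻ σ in Ioo (0:ℝ) lam, min (ENNReal.ofReal y) (dd μ f σ) := by
          refine setLIntegral_congr_fun measurableSet_Ioo
            (fun σ hσ => ?_)
          have hlt : ENNReal.ofReal y < dd μ f σ :=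
            (lt_rearr_iff μ f hney hσ.1.le).1 hσ.2
          rw [min_eq_left hlt.le]
      _ ≤ ∫⁻ σ in Ioc (0:ℝ) lam, min (ENNReal.ofReal y) (dd μ f σ) :=
          lintegral_mono' (Measure.restrict_mono Ioo_subset_Ioc_self le_rfl) le_rfl
  have term2 : ∫⁻ σ in Ioi lam, dd μ f σ =
      ∫⁻ σ in Ioi lam, min (ENNReal.ofReal y) (dd μ f σ) := by
    refine setLIntegral_congr_fun measurableSet_Ioi
      (fun σ hσ => ?_)
    have hle : dd μ f σ ≤ ENNReal.ofReal y :=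
      dd_le_of_rearr_le μ f hney (le_of_lt hσ)
    rw [min_eq_right hle]
  rw [← term2]
  exact add_le_add term1 le_rfl

lemma star (u v : X → ℝ) (hu : Measurable u) (hv : Measurable v)
    (hu0 : ∀ x, 0 ≤ u x) (hv0 : ∀ x, 0 ≤ v x) {Lu Lv : ℝ}
    (HU : dd μ u Lu ≠ ∞) (HV : dd μ v Lv ≠ ∞) {y : ℝ} (hy : 0 < y) :
    ∫⁻ s in Ioc 0 y, ENNReal.ofReal (rearr μ (fun x => u x + v x) s) ≤
      (∫⁻ s in Ioc 0 y, ENNReal.ofReal (rearr μ u s)) +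
      ∫⁻ s in Ioc 0 y, ENNReal.ofReal (rearr μ v s) := by
  set lam := rearr μ u y with hlamdef
  set kap := rearr μ v y with hkapdef
  have hlam0 : 0 ≤ lam := rearr_nonneg μ u y
  have hkap0 : 0 ≤ kap := rearr_nonneg μ v y
  set w : X → ℝ := fun x => max (u x + v x - (lam + kap)) 0 with hwdef
  have hwm : Measurable w := ((hu.add hv).sub measurable_const).max measurable_const
  have hw0 : ∀ x, 0 ≤ w x := fun x => le_max_right _ _
  have hWfin : dd μ w (Lu + Lv) ≠ ∞ := by
    have hsub : {x | Lu + Lv < |w x|} ⊆ {x | Lu < |u x|} ∪ {x | Lv < |v x|} := by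
      intro x hx
      simp only [mem_setOf_eq, mem_union, hwdef, abs_of_nonneg (hw0 x),
        abs_of_nonneg (le_max_right (u x + v x - (lam + kap)) 0),
        abs_of_nonneg (hu0 x), abs_of_nonneg (hv0 x)] at hx ⊢
      by_contra hc
      push_neg at hc
      rcases lt_max_iff.1 hx with h1 | h1
      · have := hc.1; have := hc.2; linarith
      · have := hu0 x; have := hv0 x; linarith
    refine ne_top_of_le_ne_top (ENNReal.add_ne_top.2 ⟨HU, HV⟩) ?_
    exact le_trans (measure_mono hsub) (measure_union_le _ _)
  have ha : ∀ s : ℝ, 0 < s →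
      rearr μ (fun x => u x + v x) s ≤ lam + kap + rearr μ w s := by
    intro s hs
    have hr0 : 0 ≤ rearr μ w s := rearr_nonneg μ w s
    apply rearr_le μ _ (by linarith)
    have hseteq : dd μ (fun x => u x + v x) (lam + kap + rearr μ w s) =
        dd μ w (rearr μ w s) := by
      unfold dd
      congr 1
      ext x
      simp only [mem_setOf_eq, hwdef, abs_of_nonneg (hw0 x),
        abs_of_nonneg (le_max_right (u x + v x - (lam + kap)) 0),
        abs_of_nonneg (add_nonneg (hu0 x) (hv0 x)), lt_max_iff]
      constructor
      · intro h1; left; linarith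
      · rintro (h1 | h1)
        · linarith
        · exact absurd h1 (not_lt.2 hr0)
    rw [hseteq]
    exact dd_le_of_rearr_le μ w (SS_nonempty μ w hwm hWfin hs) le_rfl
  have keyu := key_lower μ u hu hu0 HU hy
  have keyv := key_lower μ v hv hv0 HV hy
  calc ∫⁻ s in Ioc 0 y, ENNReal.ofReal (rearr μ (fun x => u x + v x) s)
      ≤ ∫⁻ s in Ioc 0 y, (ENNReal.ofReal (lam + kap) + ENNReal.ofReal (rearr μ w s)) := by
        refine lintegral_mono_ae ((ae_restrict_iff' measurableSet_Ioc).2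
          (Filter.Eventually.of_forall fun s hs => ?_))
        rw [← ENNReal.ofReal_add (by linarith) (rearr_nonneg μ w s)]
        exact ENNReal.ofReal_le_ofReal (ha s hs.1)
    _ = ENNReal.ofReal (lam + kap) * ENNReal.ofReal y +
        ∫⁻ s in Ioc 0 y, ENNReal.ofReal (rearr μ w s) := by
        rw [lintegral_add_left measurable_const, setLIntegral_const, Real.volume_Ioc, sub_zero]
    _ ≤ ENNReal.ofReal (lam + kap) * ENNReal.ofReal y +
        ∫⁻ x, ENNReal.ofReal (max (u x + v x - (lam + kap)) 0) ∂μ := by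
        gcongr
        rw [lintegral_rearr_eq μ w hwm hWfin hy]
        have := lintegral_tail μ w hwm hw0 (le_refl 0)
        calc ∫⁻ σ in Ioi (0:ℝ), min (ENNReal.ofReal y) (dd μ w σ)
            ≤ ∫⁻ σ in Ioi (0:ℝ), dd μ w σ := lintegral_mono fun σ => min_le_right _ _
          _ = ∫⁻ x, ENNReal.ofReal (max (w x - 0) 0) ∂μ := this.symm
          _ = ∫⁻ x, ENNReal.ofReal (max (u x + v x - (lam + kap)) 0) ∂μ := by
              refine lintegral_congr fun x => ?_
              rw [sub_zero, max_eq_left (hw0 x)]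
    _ ≤ ENNReal.ofReal (lam + kap) * ENNReal.ofReal y +
        (∫⁻ x, ENNReal.ofReal (max (u x - lam) 0) ∂μ +
         ∫⁻ x, ENNReal.ofReal (max (v x - kap) 0) ∂μ) := by
        gcongr
        calc ∫⁻ x, ENNReal.ofReal (max (u x + v x - (lam + kap)) 0) ∂μ
            ≤ ∫⁻ x, (ENNReal.ofReal (max (u x - lam) 0) +
                ENNReal.ofReal (max (v x - kap) 0)) ∂μ := by
              refine lintegral_mono fun x => ?_
              rw [← ENNReal.ofReal_add (le_max_right _ _) (le_max_right _ _)]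
              refine ENNReal.ofReal_le_ofReal (max_le ?_ (by positivity))
              have h1 : u x - lam ≤ max (u x - lam) 0 := le_max_left _ _
              have h2 : v x - kap ≤ max (v x - kap) 0 := le_max_left _ _
              linarith
          _ = _ := lintegral_add_left
              (((hu.sub measurable_const).max measurable_const).ennreal_ofReal) _
    _ = (ENNReal.ofReal lam * ENNReal.ofReal y +
          ∫⁻ x, ENNReal.ofReal (max (u x - lam) 0) ∂μ) +
        (ENNReal.ofReal kap * ENNReal.ofReal y +
          ∫⁻ x, ENNReal.ofReal (max (v x - kap) 0) ∂μ) := by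
        rw [ENNReal.ofReal_add hlam0 hkap0, add_mul]
        ring
    _ ≤ _ := add_le_add keyu keyv
end RearrAux

open RearrAux

theorem stmt4 {X : Type*} [MeasurableSpace X] (μ : Measure X) (b : ℝ≥0∞) (hb : 0 < b)
    (h : ℝ → ℝ) (hm : Measurable h)
    (hmono : AntitoneOn h {s : ℝ | 0 < s ∧ ENNReal.ofReal s < b})
    (hcont : ∀ s : ℝ, 0 < s → ENNReal.ofReal s < b → ContinuousWithinAt h (Set.Ici s) s)
    (hpos : ∀ s : ℝ, 0 < s → ENNReal.ofReal s < b → 0 ≤ h s)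
    (t : ℝ) (ht : 0 < t) (ht' : ENNReal.ofReal t < b)
    (u v : X → ℝ) (hu : Measurable u) (hv : Measurable v)
    (hu0 : ∀ x, 0 ≤ u x) (hv0 : ∀ x, 0 ≤ v x) :
    ∫⁻ s in Set.Ioc (0:ℝ) t, ENNReal.ofReal (rearr μ (fun x => u x + v x) s * h s) ≤
      (∫⁻ s in Set.Ioc (0:ℝ) t, ENNReal.ofReal (rearr μ u s * h s)) +
      ∫⁻ s in Set.Ioc (0:ℝ) t, ENNReal.ofReal (rearr μ v s * h s) := by
  classical
  by_cases hcase : (SS μ u t).Nonempty ∧ (SS μ v t).Nonempty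
  swap
  · -- degenerate case : the rearrangement of `u+v` vanishes on `(0,t]`.
    have hzero : ∀ s ∈ Ioc (0:ℝ) t, rearr μ (fun x => u x + v x) s = 0 := by
      intro s hs
      have hSSempty : SS μ (fun x => u x + v x) s = ∅ := by
        rw [eq_empty_iff_forall_notMem]
        intro l hl
        have hle : ENNReal.ofReal s ≤ ENNReal.ofReal t := ENNReal.ofReal_le_ofReal hs.2
        have hsubu : dd μ u l ≤ dd μ (fun x => u x + v x) l := by
          refine measure_mono fun x hx => ?_
          simp only [mem_setOf_eq, abs_of_nonneg (hu0 x),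
            abs_of_nonneg (add_nonneg (hu0 x) (hv0 x))] at hx ⊢
          have := hv0 x; linarith
        have hsubv : dd μ v l ≤ dd μ (fun x => u x + v x) l := by
          refine measure_mono fun x hx => ?_
          simp only [mem_setOf_eq, abs_of_nonneg (hv0 x),
            abs_of_nonneg (add_nonneg (hu0 x) (hv0 x))] at hx ⊢
          have := hu0 x; linarith
        exact hcase ⟨⟨l, hl.1, le_trans (le_trans hsubu hl.2) hle⟩,
          ⟨l, hl.1, le_trans (le_trans hsubv hl.2) hle⟩⟩
      rw [rearr_eq, hSSempty, Real.sInf_empty]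
    have hLHS : ∫⁻ s in Ioc (0:ℝ) t,
        ENNReal.ofReal (rearr μ (fun x => u x + v x) s * h s) = 0 := by
      rw [setLIntegral_congr_fun measurableSet_Ioc
        (fun s hs => by
          rw [hzero s hs, zero_mul, ENNReal.ofReal_zero])]
      simp
    rw [hLHS]
    exact zero_le
  obtain ⟨⟨Lu, hLu0, hLu⟩, ⟨Lv, hLv0, hLv⟩⟩ := hcase
  have HU : dd μ u Lu ≠ ∞ := ne_top_of_le_ne_top ENNReal.ofReal_ne_top hLu
  have HV : dd μ v Lv ≠ ∞ := ne_top_of_le_ne_top ENNReal.ofReal_ne_top hLv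
  have huvm : Measurable (fun x => u x + v x) := hu.add hv
  have huv0 : ∀ x, 0 ≤ u x + v x := fun x => add_nonneg (hu0 x) (hv0 x)
  have HUV : dd μ (fun x => u x + v x) (Lu + Lv) ≠ ∞ := by
    have hsub : {x | Lu + Lv < |u x + v x|} ⊆ {x | Lu < |u x|} ∪ {x | Lv < |v x|} := by
      intro x hx
      simp only [mem_setOf_eq, mem_union, abs_of_nonneg (huv0 x),
        abs_of_nonneg (hu0 x), abs_of_nonneg (hv0 x)] at hx ⊢
      by_contra hc
      push_neg at hc
      have := hc.1; have := hc.2; linarith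
    refine ne_top_of_le_ne_top (ENNReal.add_ne_top.2 ⟨HU, HV⟩) ?_
    exact le_trans (measure_mono hsub) (measure_union_le _ _)
  obtain ⟨gu, hgu, haeu⟩ := rearr_aemeasurable μ u hu HU (y := t)
  obtain ⟨gv, hgv, haev⟩ := rearr_aemeasurable μ v hv HV (y := t)
  obtain ⟨guv, hguv, haeuv⟩ := rearr_aemeasurable μ (fun x => u x + v x) huvm HUV (y := t)
  -- the `h`-layer-cake / Tonelli transformation
  have main : ∀ g : ℝ → ℝ≥0∞, Measurable g →
      ∀ f : X → ℝ, (fun s => ENNReal.ofReal (rearr μ f s)) =ᵐ[volume.restrict (Ioc 0 t)] g →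
      ∫⁻ s in Ioc (0:ℝ) t, ENNReal.ofReal (rearr μ f s * h s)
        = ∫⁻ lam in Ioi (0:ℝ), ∫⁻ s in Ioc (0:ℝ) t, (if lam < h s then g s else 0) := by
    intro g hg f hae
    have step1 : ∫⁻ s in Ioc (0:ℝ) t, ENNReal.ofReal (rearr μ f s * h s)
        = ∫⁻ s in Ioc (0:ℝ) t, g s * ENNReal.ofReal (h s) := by
      apply lintegral_congr_ae
      filter_upwards [hae] with s hs
      rw [ENNReal.ofReal_mul (rearr_nonneg μ f s), hs]
    have step2 : ∀ s : ℝ, g s * ENNReal.ofReal (h s)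
        = ∫⁻ lam in Ioi (0:ℝ), (if lam < h s then g s else 0) := by
      intro s
      have hrw : (fun lam : ℝ => if lam < h s then g s else 0)
          = (Iio (h s)).indicator (fun _ => g s) :=
        funext fun lam => by
          by_cases hc : lam < h s <;> simp [Set.indicator_apply, mem_Iio, hc]
      rw [hrw, lintegral_indicator measurableSet_Iio, setLIntegral_const,
        Measure.restrict_apply' measurableSet_Ioi, Iio_inter_Ioi, Real.volume_Ioo, sub_zero]
    have hF : Measurable (Function.uncurry fun (s lam : ℝ) =>
        if lam < h s then g s else 0) := by
      have hset : MeasurableSet {p : ℝ × ℝ | p.2 < h p.1} :=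
        measurableSet_lt measurable_snd (hm.comp measurable_fst)
      exact Measurable.ite hset (hg.comp measurable_fst) measurable_const
    calc ∫⁻ s in Ioc (0:ℝ) t, ENNReal.ofReal (rearr μ f s * h s)
        = ∫⁻ s in Ioc (0:ℝ) t, g s * ENNReal.ofReal (h s) := step1
      _ = ∫⁻ s in Ioc (0:ℝ) t, ∫⁻ lam in Ioi (0:ℝ), (if lam < h s then g s else 0) :=
          lintegral_congr fun s => step2 s
      _ = ∫⁻ lam in Ioi (0:ℝ), ∫⁻ s in Ioc (0:ℝ) t, (if lam < h s then g s else 0) :=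
          lintegral_lintegral_swap hF.aemeasurable
  -- conversion of the inner integral to a set integral over an initial segment
  have conv0 : ∀ (g : ℝ → ℝ≥0∞) (lam : ℝ), Measurable g →
      ∫⁻ s in Ioc (0:ℝ) t, (if lam < h s then g s else 0)
        = ∫⁻ s in {s' : ℝ | lam < h s'} ∩ Ioc (0:ℝ) t, g s := by
    intro g lam hg
    have hmeas : MeasurableSet {s' : ℝ | lam < h s'} := hm measurableSet_Ioi
    have hrw : (fun s => if lam < h s then g s else 0)
        = ({s' : ℝ | lam < h s'}).indicator g :=
      funext fun s => by
        by_cases hc : lam < h s <;> simp [Set.indicator_apply, mem_setOf_eq, hc]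
    rw [hrw, lintegral_indicator hmeas, Measure.restrict_restrict hmeas]
  -- pointwise (in `lam`) inequality
  have perlam : ∀ lam : ℝ,
      (∫⁻ s in Ioc (0:ℝ) t, (if lam < h s then guv s else 0)) ≤
        (∫⁻ s in Ioc (0:ℝ) t, (if lam < h s then gu s else 0)) +
        ∫⁻ s in Ioc (0:ℝ) t, (if lam < h s then gv s else 0) := by
    intro lam
    rw [conv0 guv lam hguv, conv0 gu lam hgu, conv0 gv lam hgv]
    set I := {s' : ℝ | lam < h s'} ∩ Ioc (0:ℝ) t with hIdef
    have hIsub : I ⊆ Ioc (0:ℝ) t := inter_subset_right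
    have hinit : ∀ s₀ ∈ I, ∀ s : ℝ, 0 < s → s ≤ s₀ → s ∈ I := by
      rintro s₀ ⟨hh0, hs0⟩ s hs hss0
      refine ⟨?_, hs, le_trans hss0 hs0.2⟩
      have hdom : ∀ r : ℝ, 0 < r → r ≤ t → r ∈ {s : ℝ | 0 < s ∧ ENNReal.ofReal s < b} :=
        fun r h1 h2 => ⟨h1, lt_of_le_of_lt (ENNReal.ofReal_le_ofReal h2) ht'⟩
      have hmle := hmono (hdom s hs (le_trans hss0 hs0.2)) (hdom s₀ hs0.1 hs0.2) hss0
      exact lt_of_lt_of_le hh0 hmle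
    set c := sSup (insert 0 I) with hcdef
    have hbdd : BddAbove (insert 0 I) := by
      refine ⟨t, ?_⟩
      rintro r hr
      rcases mem_insert_iff.1 hr with rfl | hrI
      · exact ht.le
      · exact (hIsub hrI).2
    have hc0 : 0 ≤ c := le_csSup hbdd (mem_insert 0 I)
    have hsub1 : Ioo (0:ℝ) c ⊆ I := by
      intro s hs
      obtain ⟨a, ha, hsa⟩ := exists_lt_of_lt_csSup (insert_nonempty 0 I) hs.2
      rcases mem_insert_iff.1 ha with rfl | haI
      · exact absurd hs.1 (by linarith)
      · exact hinit a haI s hs.1 hsa.le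
    have hsub2 : I ⊆ Ioc (0:ℝ) c :=
      fun s hs => ⟨(hIsub hs).1, le_csSup hbdd (mem_insert_of_mem _ hs)⟩
    have haeset : I =ᵐ[volume] Ioc (0:ℝ) c := by
      rw [MeasureTheory.ae_eq_set]
      constructor
      · rw [diff_eq_empty.2 hsub2]; simp
      · refine measure_mono_null (fun s hs => ?_) (measure_singleton c)
        rcases hs with ⟨hs1, hs2⟩
        simp only [mem_singleton_iff]
        by_contra hne
        exact hs2 (hsub1 ⟨hs1.1, lt_of_le_of_ne hs1.2 hne⟩)
    have conv : ∀ (f : X → ℝ) (g : ℝ → ℝ≥0∞),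
        (fun s => ENNReal.ofReal (rearr μ f s)) =ᵐ[volume.restrict (Ioc 0 t)] g →
        ∫⁻ s in I, g s = ∫⁻ s in Ioc (0:ℝ) c, ENNReal.ofReal (rearr μ f s) := by
      intro f g hae
      have h2 : (fun s => ENNReal.ofReal (rearr μ f s)) =ᵐ[volume.restrict I] g :=
        ae_restrict_of_ae_restrict_of_subset hIsub hae
      have h1 : ∫⁻ s in I, g s = ∫⁻ s in I, ENNReal.ofReal (rearr μ f s) :=
        lintegral_congr_ae h2.symm
      rw [h1]
      exact setLIntegral_congr haeset
    rw [conv _ _ haeuv, conv _ _ haeu, conv _ _ haev]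
    rcases lt_or_ge 0 c with hcpos | hcnonpos
    · exact star μ u v hu hv hu0 hv0 HU HV hcpos
    · rw [Ioc_eq_empty (by exact not_lt.2 hcnonpos)]
      simp
  -- measurability of the `lam`-integrands
  have hQmeas : ∀ g : ℝ → ℝ≥0∞, Measurable g →
      Measurable (fun lam => ∫⁻ s in Ioc (0:ℝ) t, (if lam < h s then g s else 0)) := by
    intro g hg
    have hset : MeasurableSet {p : ℝ × ℝ | p.1 < h p.2} :=
      measurableSet_lt measurable_fst (hm.comp measurable_snd)
    have hF : Measurable (Function.uncurry fun (lam s : ℝ) =>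
        if lam < h s then g s else 0) :=
      Measurable.ite hset (hg.comp measurable_snd) measurable_const
    exact hF.lintegral_prod_right
  rw [main guv hguv _ haeuv, main gu hgu _ haeu, main gv hgv _ haev]
  calc ∫⁻ lam in Ioi (0:ℝ), ∫⁻ s in Ioc (0:ℝ) t, (if lam < h s then guv s else 0)
      ≤ ∫⁻ lam in Ioi (0:ℝ),
          ((∫⁻ s in Ioc (0:ℝ) t, (if lam < h s then gu s else 0)) +
           ∫⁻ s in Ioc (0:ℝ) t, (if lam < h s then gv s else 0)) :=
        lintegral_mono fun lam => perlam lam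
    _ = _ := lintegral_add_left (hQmeas gu hgu) _
end

section
/- Let L ∈ (0,∞) and p ∈ [1,∞). For every measurable f on a non-atomic measure space with μ(X) = L: ∫₀ᴸ (1/t) ∫₀ᵗ f*(s)^p ds dt = ∫₀ᴸ f*(s)^p log(L/s) ds. Consequently e^{−1/p} ‖f‖_{L^{p,p;1/p}} ≤ ‖f‖_{(L^p)^⟨p⟩} ≤ ‖f‖_{L^{p,p;1/p}}, where ‖f‖_{L^{p,p;1/p}} = (∫₀ᴸ f*(s)^p log(eL/s) ds)^{1/p} and ‖f‖_{(L^p)^⟨p⟩} = (∫₀ᴸ (1/t)∫₀ᵗ f*(s)^p ds dt)^{1/p}. -/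
open MeasureTheory ENNReal Set

open Filter Topology Function in
lemma rearr_set_nonempty {X : Type*} [MeasurableSpace X] (μ : Measure X) [IsFiniteMeasure μ]
    {f : X → ℝ} (hf : Measurable f) {t : ℝ} (ht : 0 < t) :
    {l : ℝ | 0 ≤ l ∧ μ {x | l < |f x|} ≤ ENNReal.ofReal t}.Nonempty := by
  have hmeas : ∀ n : ℕ, NullMeasurableSet {x | (n : ℝ) < |f x|} μ :=
    fun n => (measurableSet_lt measurable_const hf.abs).nullMeasurableSet
  have hmono : Antitone fun n : ℕ => {x | (n : ℝ) < |f x|} := by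
    intro n m hnm x hx
    exact lt_of_le_of_lt ((Nat.cast_le (α := ℝ)).mpr hnm) hx
  have h1 : Tendsto (fun n : ℕ => μ {x | (n : ℝ) < |f x|}) atTop
      (𝓝 (μ (⋂ n : ℕ, {x | (n : ℝ) < |f x|}))) :=
    tendsto_measure_iInter_atTop hmeas hmono ⟨0, measure_ne_top μ _⟩
  have hempty : (⋂ n : ℕ, {x | (n : ℝ) < |f x|}) = ∅ := by
    ext x
    simp only [Set.mem_iInter, Set.mem_setOf_eq, Set.mem_empty_iff_false, iff_false, not_forall,
      not_lt]
    obtain ⟨n, hn⟩ := exists_nat_ge |f x|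
    exact ⟨n, hn⟩
  rw [hempty, measure_empty] at h1
  obtain ⟨n, hn⟩ := (h1.eventually_lt_const (ENNReal.ofReal_pos.2 ht)).exists
  exact ⟨n, n.cast_nonneg, hn.le⟩

lemma rearr_antitoneOn {X : Type*} [MeasurableSpace X] (μ : Measure X) [IsFiniteMeasure μ]
    {f : X → ℝ} (hf : Measurable f) : AntitoneOn (rearr μ f) (Set.Ioi 0) := by
  intro t ht t' ht' htt'
  refine csInf_le_csInf ⟨0, fun l hl => hl.1⟩ (rearr_set_nonempty μ hf ht) ?_
  exact fun l hl => ⟨hl.1, hl.2.trans (ENNReal.ofReal_le_ofReal htt')⟩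

lemma lint_inv {s L : ℝ} (hs : 0 < s) (hsL : s ≤ L) :
    ∫⁻ t in Set.Icc s L, (ENNReal.ofReal t)⁻¹ = ENNReal.ofReal (Real.log (L / s)) := by
  rw [← Measure.restrict_congr_set Ioc_ae_eq_Icc]
  rw [setLIntegral_congr_fun measurableSet_Ioc (fun t ht =>
    (ENNReal.ofReal_inv_of_pos (hs.trans ht.1)).symm)]
  have hint : IntegrableOn (fun t : ℝ => t⁻¹) (Set.Ioc s L) := by
    refine ((ContinuousOn.integrableOn_compact isCompact_Icc ?_).mono_set Set.Ioc_subset_Icc_self)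
    exact continuousOn_inv₀.mono fun t ht => ne_of_gt (hs.trans_le ht.1)
  rw [← ofReal_integral_eq_lintegral_ofReal hint
    (ae_restrict_of_forall_mem measurableSet_Ioc fun t ht => (inv_nonneg).2 (hs.trans ht.1).le)]
  rw [← intervalIntegral.integral_of_le hsL, integral_inv_of_pos hs (hs.trans_le hsL)]

open Function in
lemma fubini_key {g : ℝ → ℝ≥0∞} {L : ℝ} (hL : 0 < L)
    (hg : AEMeasurable g (volume.restrict (Set.Ioc 0 L))) :
    (∫⁻ t in Set.Ioc (0:ℝ) L, (1 / ENNReal.ofReal t) * ∫⁻ s in Set.Ioc (0:ℝ) t, g s) =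
      ∫⁻ s in Set.Ioc (0:ℝ) L, g s * ENNReal.ofReal (Real.log (L / s)) := by
  set k : ℝ → ℝ → ℝ≥0∞ := fun t s =>
    ({q : ℝ × ℝ | q.2 ≤ q.1}.indicator (fun q => (ENNReal.ofReal q.1)⁻¹ * g q.2)) (t, s) with hk
  have hkmeas : AEMeasurable (uncurry k) ((volume.restrict (Set.Ioc (0:ℝ) L)).prod
      (volume.restrict (Set.Ioc (0:ℝ) L))) := by
    have : uncurry k = ({q : ℝ × ℝ | q.2 ≤ q.1}.indicator
        (fun q => (ENNReal.ofReal q.1)⁻¹ * g q.2)) := rfl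
    rw [this]
    exact AEMeasurable.indicator
      ((measurable_fst.ennreal_ofReal.inv.aemeasurable).mul
        (hg.comp_quasiMeasurePreserving Measure.quasiMeasurePreserving_snd))
      (measurableSet_le measurable_snd measurable_fst)
  have step1 : (∫⁻ t in Set.Ioc (0:ℝ) L, (1 / ENNReal.ofReal t) * ∫⁻ s in Set.Ioc (0:ℝ) t, g s)
      = ∫⁻ t in Set.Ioc (0:ℝ) L, ∫⁻ s in Set.Ioc (0:ℝ) L, k t s := by
    refine setLIntegral_congr_fun measurableSet_Ioc (fun t ht => ?_)
    have hkt : (fun s => k t s) = (Set.Iic t).indicator (fun s => (ENNReal.ofReal t)⁻¹ * g s) := by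
      funext s
      simp [hk, Set.indicator_apply, Set.mem_Iic, Set.mem_setOf_eq]
    rw [hkt, lintegral_indicator measurableSet_Iic, Measure.restrict_restrict measurableSet_Iic]
    have hset : Set.Iic t ∩ Set.Ioc 0 L = Set.Ioc 0 t := by
      ext s
      simp only [Set.mem_inter_iff, Set.mem_Iic, Set.mem_Ioc]
      exact ⟨fun ⟨h1, h2, _⟩ => ⟨h2, h1⟩, fun ⟨h1, h2⟩ => ⟨h2, h1, h2.trans ht.2⟩⟩
    rw [hset, lintegral_const_mul' _ _ (by simp [ENNReal.ofReal_pos.2 ht.1, ne_of_gt]), one_div]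
  have step3 : ∀ s ∈ Set.Ioc (0:ℝ) L,
      (∫⁻ t in Set.Ioc (0:ℝ) L, k t s) = g s * ENNReal.ofReal (Real.log (L / s)) := by
    intro s hs
    have hks : (fun t => k t s) = (Set.Ici s).indicator (fun t => g s * (ENNReal.ofReal t)⁻¹) := by
      funext t
      simp [hk, Set.indicator_apply, Set.mem_Ici, Set.mem_setOf_eq, mul_comm]
    rw [hks, lintegral_indicator measurableSet_Ici, Measure.restrict_restrict measurableSet_Ici]
    have hset : Set.Ici s ∩ Set.Ioc 0 L = Set.Icc s L := by
      ext t
      simp only [Set.mem_inter_iff, Set.mem_Ici, Set.mem_Ioc, Set.mem_Icc]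
      exact ⟨fun ⟨h1, _, h3⟩ => ⟨h1, h3⟩, fun ⟨h1, h2⟩ => ⟨h1, hs.1.trans_le h1, h2⟩⟩
    rw [hset, lintegral_const_mul _ (show Measurable fun t : ℝ => (ENNReal.ofReal t)⁻¹ from ENNReal.measurable_ofReal.inv), lint_inv hs.1 hs.2]
  rw [step1, lintegral_lintegral_swap hkmeas]
  exact setLIntegral_congr_fun measurableSet_Ioc step3

theorem stmt17 {X : Type*} [MeasurableSpace X] (μ : Measure X) [NullSingletonClass μ]
    (L : ℝ) (hL : 0 < L) (hμ : μ Set.univ = ENNReal.ofReal L)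
    (p : ℝ) (hp : 1 ≤ p) (f : X → ℝ) (hf : Measurable f) :
    (∫⁻ t in Set.Ioc (0:ℝ) L,
        (1 / ENNReal.ofReal t) * ∫⁻ s in Set.Ioc (0:ℝ) t, ENNReal.ofReal (rearr μ f s) ^ p) =
      (∫⁻ s in Set.Ioc (0:ℝ) L,
        ENNReal.ofReal (rearr μ f s) ^ p * ENNReal.ofReal (Real.log (L / s))) ∧
    ENNReal.ofReal (Real.exp (-(1/p))) *
        (∫⁻ s in Set.Ioc (0:ℝ) L,
          ENNReal.ofReal (rearr μ f s) ^ p *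
            ENNReal.ofReal (Real.log (Real.exp 1 * L / s))) ^ (1/p) ≤
      (∫⁻ t in Set.Ioc (0:ℝ) L,
        (1 / ENNReal.ofReal t) *
          ∫⁻ s in Set.Ioc (0:ℝ) t, ENNReal.ofReal (rearr μ f s) ^ p) ^ (1/p) ∧
    (∫⁻ t in Set.Ioc (0:ℝ) L,
        (1 / ENNReal.ofReal t) *
          ∫⁻ s in Set.Ioc (0:ℝ) t, ENNReal.ofReal (rearr μ f s) ^ p) ^ (1/p) ≤
      (∫⁻ s in Set.Ioc (0:ℝ) L,
        ENNReal.ofReal (rearr μ f s) ^ p *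
          ENNReal.ofReal (Real.log (Real.exp 1 * L / s))) ^ (1/p) := by
  have hfin : IsFiniteMeasure μ := ⟨by rw [hμ]; exact ENNReal.ofReal_lt_top⟩
  have hp0 : (0:ℝ) < p := lt_of_lt_of_le one_pos hp
  have h1p : (0:ℝ) ≤ 1/p := by positivity
  set g : ℝ → ℝ≥0∞ := fun s => ENNReal.ofReal (rearr μ f s) ^ p with hg_def
  have hganti : AntitoneOn g (Set.Ioi 0) := fun a ha b hb hab =>
    ENNReal.rpow_le_rpow (ENNReal.ofReal_le_ofReal (rearr_antitoneOn μ hf ha hb hab)) hp0.le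
  have hg0 : AEMeasurable g (volume.restrict (Set.Ioi 0)) :=
    aemeasurable_restrict_of_antitoneOn measurableSet_Ioi hganti
  have hgL : AEMeasurable g (volume.restrict (Set.Ioc 0 L)) :=
    hg0.mono_measure (Measure.restrict_mono Set.Ioc_subset_Ioi_self le_rfl)
  have key := fubini_key hL hgL
  have hE1 : (1:ℝ) ≤ Real.exp 1 := by have := Real.add_one_le_exp 1; linarith
  have hE0 : (0:ℝ) < Real.exp 1 := Real.exp_pos 1
  set B : ℝ≥0∞ := ∫⁻ s in Set.Ioc (0:ℝ) L, g s * ENNReal.ofReal (Real.log (L / s)) with hB_def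
  set A : ℝ≥0∞ := ∫⁻ s in Set.Ioc (0:ℝ) L,
      g s * ENNReal.ofReal (Real.log (Real.exp 1 * L / s)) with hA_def
  have hBA : B ≤ A := by
    refine lintegral_mono_ae ?_
    filter_upwards [ae_restrict_mem measurableSet_Ioc] with s hs
    refine mul_le_mul_right (ENNReal.ofReal_le_ofReal (Real.log_le_log (div_pos hL hs.1) ?_)) _
    rw [mul_div_assoc]
    exact le_mul_of_one_le_left (div_nonneg hL.le hs.1.le) hE1
  have hAB : A ≤ ENNReal.ofReal (Real.exp 1) * B := by
    set H : ℝ → ℝ≥0∞ := (Set.Ioc (0:ℝ) L).indicator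
      (fun s => g s * ENNReal.ofReal (Real.log (Real.exp 1 * L / s))) with hH_def
    have hHmeas : AEMeasurable H volume := by
      rw [hH_def, aemeasurable_indicator_iff measurableSet_Ioc]
      exact hgL.mul
        ((Real.measurable_log.comp (measurable_const.div measurable_id)).ennreal_ofReal.aemeasurable)
    have hmap : Measure.map (fun x : ℝ => Real.exp 1 * x) volume
        = ENNReal.ofReal (Real.exp 1)⁻¹ • volume := by
      rw [Real.map_volume_mul_left (ne_of_gt hE0)]
      congr 1
      rw [abs_of_nonneg (inv_nonneg.2 hE0.le)]
    have hsub : ENNReal.ofReal (Real.exp 1)⁻¹ * ∫⁻ y, H y = ∫⁻ σ, H (Real.exp 1 * σ) := by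
      rw [show ENNReal.ofReal (Real.exp 1)⁻¹ * ∫⁻ y, H y = ENNReal.ofReal (Real.exp 1)⁻¹ • ∫⁻ y, H y from rfl,
        ← lintegral_smul_measure, ← hmap,
        lintegral_map' (by rw [hmap]; exact hHmeas.smul_measure _)
          (measurable_const_mul (Real.exp 1)).aemeasurable]
    have hA' : A = ∫⁻ y, H y := (lintegral_indicator measurableSet_Ioc _).symm
    have hEE : ENNReal.ofReal (Real.exp 1) * ENNReal.ofReal (Real.exp 1)⁻¹ = 1 := by
      rw [← ENNReal.ofReal_mul hE0.le, mul_inv_cancel₀ (ne_of_gt hE0), ENNReal.ofReal_one]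
    have hHE : ∀ σ : ℝ, H (Real.exp 1 * σ) = (Set.Ioc (0:ℝ) (L / Real.exp 1)).indicator
        (fun σ => g (Real.exp 1 * σ) * ENNReal.ofReal (Real.log (L / σ))) σ := by
      intro σ
      have hiff : Real.exp 1 * σ ∈ Set.Ioc (0:ℝ) L ↔ σ ∈ Set.Ioc (0:ℝ) (L / Real.exp 1) := by
        simp only [Set.mem_Ioc]
        constructor
        · rintro ⟨h1, h2⟩
          exact ⟨by nlinarith, (le_div_iff₀' hE0).2 h2⟩
        · rintro ⟨h1, h2⟩
          exact ⟨mul_pos hE0 h1, (le_div_iff₀' hE0).1 h2⟩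
      by_cases hσ : σ ∈ Set.Ioc (0:ℝ) (L / Real.exp 1)
      · rw [Set.indicator_of_mem hσ, hH_def, Set.indicator_of_mem (hiff.2 hσ)]
        congr 2
        rw [mul_div_mul_left _ _ (ne_of_gt hE0)]
      · rw [Set.indicator_of_notMem hσ, hH_def, Set.indicator_of_notMem (fun h => hσ (hiff.1 h))]
    have hmono : ∫⁻ σ, H (Real.exp 1 * σ) ≤ B := by
      calc ∫⁻ σ, H (Real.exp 1 * σ)
          = ∫⁻ σ in Set.Ioc (0:ℝ) (L / Real.exp 1),
              g (Real.exp 1 * σ) * ENNReal.ofReal (Real.log (L / σ)) := by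
            simp_rw [hHE]; exact lintegral_indicator measurableSet_Ioc _
        _ ≤ ∫⁻ σ in Set.Ioc (0:ℝ) (L / Real.exp 1), g σ * ENNReal.ofReal (Real.log (L / σ)) := by
            refine lintegral_mono_ae ?_
            filter_upwards [ae_restrict_mem measurableSet_Ioc] with σ hσ
            exact mul_le_mul_left
              (hganti hσ.1 (mul_pos hE0 hσ.1) (le_mul_of_one_le_left hσ.1.le hE1)) _
        _ ≤ B := lintegral_mono_set (Set.Ioc_subset_Ioc_right (div_le_self hL.le hE1))
    calc A = 1 * A := (one_mul A).symm
      _ = ENNReal.ofReal (Real.exp 1) * (ENNReal.ofReal (Real.exp 1)⁻¹ * A) := by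
          rw [← mul_assoc, hEE]
      _ = ENNReal.ofReal (Real.exp 1) * ∫⁻ σ, H (Real.exp 1 * σ) := by rw [hA', hsub]
      _ ≤ ENNReal.ofReal (Real.exp 1) * B := mul_le_mul_right hmono _
  refine ⟨key, ?_, ?_⟩
  · rw [key]
    calc ENNReal.ofReal (Real.exp (-(1/p))) * A ^ (1/p)
        ≤ ENNReal.ofReal (Real.exp (-(1/p))) * (ENNReal.ofReal (Real.exp 1) * B) ^ (1/p) :=
          mul_le_mul_right (ENNReal.rpow_le_rpow hAB h1p) _
      _ = ENNReal.ofReal (Real.exp (-(1/p))) * ENNReal.ofReal (Real.exp 1) ^ (1/p) * B ^ (1/p) := by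
          rw [ENNReal.mul_rpow_of_nonneg _ _ h1p, mul_assoc]
      _ = B ^ (1/p) := by
          rw [ENNReal.ofReal_rpow_of_pos hE0, ← ENNReal.ofReal_mul (Real.exp_pos _).le,
            Real.exp_one_rpow, ← Real.exp_add]
          norm_num
  · rw [key]
    exact ENNReal.rpow_le_rpow hBA h1p
end
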